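/- For every set S of positive integers, the minimal set M(S) is finite. -/

import Mathlib

/-- `Subseq x y` means the decimal digit string of `x` is a subsequence of that of `y`. -/
def Subseq (x y : ℕ) : Prop := (Nat.digits 10 x).Sublist (Nat.digits 10 y)

/-- The minimal set of `S`: elements of `S` containing no smaller element of `S`
as a subsequence of their decimal digits. -/
def minimalSet (S : Set ℕ) : Set ℕ := {s ∈ S | ¬ ∃ n ∈ S, n < s ∧ Subseq n s}

theorem minimalSet_finite (S : Set ℕ) (hS : ∀ n ∈ S, 1 ≤ n) :
    (minimalSet S).Finite := by
  have key : {l : List ℕ | ∀ x, x ∈ l → x ∈ Set.Iio 10}.PartiallyWellOrderedOn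
      (List.SublistForall₂ (· = ·)) :=
    Set.PartiallyWellOrderedOn.partiallyWellOrderedOn_sublistForall₂ (· = ·)
      ((Set.finite_Iio 10).partiallyWellOrderedOn)
  rw [← Set.not_infinite]
  intro hinf
  set e := hinf.natEmbedding
  obtain ⟨m, n, hmn, hsub⟩ := key.exists_lt (f := fun k => Nat.digits 10 (e k)) (by
    intro k x hx
    exact Nat.digits_lt_base (by norm_num) hx)
  rw [List.sublistForall₂_iff] at hsub
  obtain ⟨l, hl, hsl⟩ := hsub
  rw [List.forall₂_eq_eq_eq] at hl
  subst hl
  have hne : (e m : ℕ) ≠ (e n : ℕ) := fun h =>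
    hmn.ne (e.injective (Subtype.ext h))
  rcases lt_or_gt_of_ne hne with h | h
  · exact (e n).2.2 ⟨e m, (e m).2.1, h, hsl⟩
  · have hlen : (Nat.digits 10 (e n : ℕ)).length ≤ (Nat.digits 10 (e m : ℕ)).length :=
      Nat.le_digits_len_le 10 _ _ h.le
    exact hne (Nat.digits.injective 10 (hsl.eq_of_length (le_antisymm hsl.length_le hlen)))
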